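/- For any star S and any tree T on n vertices, gm(S □ T) ≤ √(2n) + 1; that is, if the k × k grid is a minor of the Cartesian product S □ T, then k ≤ √(2n) + 1. -/

import Mathlib

open SimpleGraph

/-- `G` is a minor of `H`: there is a model of `G` in `H`, i.e. a family of pairwise
disjoint branch sets, each inducing a connected subgraph of `H`, with an edge of `H`
between the branch sets of any two adjacent vertices of `G`. -/
def SimpleGraph.IsMinorOf {α : Type*} {β : Type*} (G : SimpleGraph α) (H : SimpleGraph β) :
    Prop :=
  ∃ B : α → Set β,
    (∀ x, (H.induce (B x)).Connected) ∧
    (Pairwise fun x y => Disjoint (B x) (B y)) ∧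
    (∀ ⦃x y⦄, G.Adj x y → ∃ a ∈ B x, ∃ b ∈ B y, H.Adj a b)

/-- The strong product of two simple graphs. -/
def strongProd {α β : Type*} (G : SimpleGraph α) (H : SimpleGraph β) :
    SimpleGraph (α × β) where
  Adj a b := (a.1 = b.1 ∧ H.Adj a.2 b.2) ∨ (a.2 = b.2 ∧ G.Adj a.1 b.1) ∨
             (G.Adj a.1 b.1 ∧ H.Adj a.2 b.2)
  symm := ⟨by
    rintro a b (⟨h1, h2⟩ | ⟨h1, h2⟩ | ⟨h1, h2⟩)
    · exact Or.inl ⟨h1.symm, h2.symm⟩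
    · exact Or.inr (Or.inl ⟨h1.symm, h2.symm⟩)
    · exact Or.inr (Or.inr ⟨h1.symm, h2.symm⟩)⟩
  loopless := ⟨by
    rintro a (⟨_, h⟩ | ⟨_, h⟩ | ⟨h, _⟩)
    · exact H.irrefl h
    · exact G.irrefl h
    · exact G.irrefl h⟩

/-- The lexicographic product of two simple graphs. -/
def lexProd {α β : Type*} (G : SimpleGraph α) (H : SimpleGraph β) :
    SimpleGraph (α × β) where
  Adj a b := G.Adj a.1 b.1 ∨ (a.1 = b.1 ∧ H.Adj a.2 b.2)
  symm := ⟨by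
    rintro a b (h | ⟨h1, h2⟩)
    · exact Or.inl h.symm
    · exact Or.inr ⟨h1.symm, h2.symm⟩⟩
  loopless := ⟨by
    rintro a (h | ⟨_, h⟩)
    · exact G.irrefl h
    · exact H.irrefl h⟩

/-- The `k × k` grid graph: vertices `{0,…,k-1}²`, two vertices adjacent iff they differ
by exactly one in exactly one coordinate. -/
def gridGraph (k : ℕ) : SimpleGraph (Fin k × Fin k) :=
  SimpleGraph.fromRel (fun a b =>
    (a.1 = b.1 ∧ a.2.val + 1 = b.2.val) ∨ (a.2 = b.2 ∧ a.1.val + 1 = b.1.val))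

/-- The star with `n` leaves: the root `none` is adjacent to each leaf `some i`. -/
def starGraph (n : ℕ) : SimpleGraph (Option (Fin n)) :=
  SimpleGraph.fromRel (fun a b => a = none ∧ b ≠ none)

/-- The subdivided star `S_{ℓ,p}`: a star with `ℓ` leaves, each edge subdivided `p-1`
times, i.e. a centre `none` with `ℓ` pendant paths `some (i, 0), …, some (i, p-1)`. -/
def subStar (ℓ p : ℕ) : SimpleGraph (Option (Fin ℓ × Fin p)) :=
  SimpleGraph.fromRel (fun a b =>
    (a = none ∧ ∃ (i : Fin ℓ) (j : Fin p), j.val = 0 ∧ b = some (i, j)) ∨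
    (∃ (i : Fin ℓ) (j k : Fin p), a = some (i, j) ∧ b = some (i, k) ∧ j.val + 1 = k.val))

/-- `G` admits a tree-decomposition of width at most `w`: there is a tree `T` (indexed by
`ℕ`) and bags such that every vertex and every edge of `G` lies in some bag, for every
vertex of `G` the set of nodes whose bag contains it induces a non-empty connected
subtree of `T`, and every bag has at most `w + 1` vertices. -/
def HasDecompWidth {V : Type*} (G : SimpleGraph V) (w : ℕ) : Prop :=
  ∃ (T : SimpleGraph ℕ) (bag : ℕ → Finset V),
    T.IsTree ∧
    (∀ v : V, ∃ i, v ∈ bag i) ∧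
    (∀ u v : V, G.Adj u v → ∃ i, u ∈ bag i ∧ v ∈ bag i) ∧
    (∀ v : V, (T.induce {i | v ∈ bag i}).Connected) ∧
    (∀ i, (bag i).card ≤ w + 1)

/-- The treewidth of a finite graph: the minimum width of a tree-decomposition. -/
noncomputable def treewidth {V : Type*} [Fintype V] (G : SimpleGraph V) : ℕ :=
  sInf { w | HasDecompWidth G w }

/-- `gm G`: the maximum `k` such that the `k × k` grid is a minor of `G`. -/
noncomputable def gridMinorNum {V : Type*} (G : SimpleGraph V) : ℕ :=
  sSup { k | (gridGraph k).IsMinorOf G }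

/-- A walk in a tree rooted at `r` is vertical if it contains at most one vertex of
each depth (distance from the root). -/
def IsVertical {V : Type*} (T : SimpleGraph V) (r : V) {u w : V} (p : T.Walk u w) : Prop :=
  ∀ x ∈ p.support, ∀ y ∈ p.support, T.dist r x = T.dist r y → x = y

/-- In the tree `T` rooted at `r`, `v` is an ancestor of `w`: `v` lies on the unique
path from `r` to `w` (in a tree this is equivalent to this distance identity). -/
def Ancestor {V : Type*} (T : SimpleGraph V) (r v w : V) : Prop :=
  T.dist r w = T.dist r v + T.dist v w

/-- Two vertices of a rooted tree are related if one is an ancestor of the other. -/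
def Related {V : Type*} (T : SimpleGraph V) (r v w : V) : Prop :=
  Ancestor T r v w ∨ Ancestor T r w v

/-- The height of `v` in the tree `T` rooted at `r`: the maximum order (number of
vertices) of a vertical path whose upper (minimum-depth) endpoint is `v`. -/
noncomputable def height {V : Type*} (T : SimpleGraph V) (r v : V) : ℕ :=
  sSup { n | ∃ (w : V) (p : T.Walk v w), p.IsPath ∧ IsVertical T r p ∧
      (∀ x ∈ p.support, T.dist r v ≤ T.dist r x) ∧ p.support.length = n }

/-- The radius of a finite graph: the least `e` such that some vertex is within
distance `e` of every vertex. -/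
noncomputable def graphRadius {V : Type*} [Fintype V] (T : SimpleGraph V) : ℕ :=
  sInf { e | ∃ v, ∀ w, T.dist v w ≤ e }

namespace Stmt17Aux


/-- connectivity within a set, phrased via walks with support in the set -/
def ConnIn {α : Type*} (G : SimpleGraph α) (s : Set α) : Prop :=
  s.Nonempty ∧ ∀ x ∈ s, ∀ y ∈ s, ∃ p : G.Walk x y, ∀ v ∈ p.support, v ∈ s

lemma exists_walk_in {α : Type*} (G : SimpleGraph α) (s : Set α)
    (h : (G.induce s).Connected) {x y : α} (hx : x ∈ s) (hy : y ∈ s) :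
    ∃ p : G.Walk x y, ∀ v ∈ p.support, v ∈ s := by
  obtain ⟨q⟩ := h.preconnected ⟨x, hx⟩ ⟨y, hy⟩
  refine ⟨q.map (SimpleGraph.Embedding.induce s).toHom, ?_⟩
  intro v hv
  change v ∈ (q.map (SimpleGraph.Embedding.induce s).toHom).support at hv
  rw [SimpleGraph.Walk.support_map] at hv
  obtain ⟨u, _, rfl⟩ := List.mem_map.mp hv
  exact u.2

lemma connIn_of_induce {α : Type*} (G : SimpleGraph α) (s : Set α)
    (h : (G.induce s).Connected) : ConnIn G s := by
  obtain ⟨⟨x, hx⟩⟩ := h.nonempty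
  exact ⟨⟨x, hx⟩, fun a ha b hb => exists_walk_in G s h ha hb⟩

/-- a tree (acyclic graph) has no `C₄` "minor": four disjoint connected sets
with edges in cyclic order give a contradiction -/
lemma tree_no_c4 {α : Type*} {G : SimpleGraph α} (hT : G.IsAcyclic)
    (S0 S1 S2 S3 : Set α)
    (h0 : ConnIn G S0) (h1 : ConnIn G S1) (h2 : ConnIn G S2) (h3 : ConnIn G S3)
    (d01 : ∀ t, t ∈ S0 → t ∈ S1 → False)
    (d02 : ∀ t, t ∈ S0 → t ∈ S2 → False)
    (d03 : ∀ t, t ∈ S0 → t ∈ S3 → False)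
    (d12 : ∀ t, t ∈ S1 → t ∈ S2 → False)
    (d13 : ∀ t, t ∈ S1 → t ∈ S3 → False)
    (d23 : ∀ t, t ∈ S2 → t ∈ S3 → False)
    (e01 : ∃ a ∈ S0, ∃ b ∈ S1, G.Adj a b)
    (e12 : ∃ a ∈ S1, ∃ b ∈ S2, G.Adj a b)
    (e23 : ∃ a ∈ S2, ∃ b ∈ S3, G.Adj a b)
    (e30 : ∃ a ∈ S3, ∃ b ∈ S0, G.Adj a b) : False := by
  obtain ⟨a0, ha0, b0, hb0, hadj0⟩ := e01
  obtain ⟨a1, ha1, b1, hb1, hadj1⟩ := e12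
  obtain ⟨a2, ha2, b2, hb2, hadj2⟩ := e23
  obtain ⟨a3, ha3, b3, hb3, hadj3⟩ := e30
  obtain ⟨P0, hP0⟩ := h0.2 a0 ha0 b3 hb3
  obtain ⟨P3, hP3⟩ := h3.2 a3 ha3 b2 hb2
  obtain ⟨P2, hP2⟩ := h2.2 a2 ha2 b1 hb1
  obtain ⟨P1, hP1⟩ := h1.2 a1 ha1 b0 hb0
  have hbridge := (isAcyclic_iff_forall_adj_isBridge.mp hT) hadj0
  rw [isBridge_iff_adj_and_forall_walk_mem_edges] at hbridge
  set W : G.Walk a0 b0 :=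
    P0.append (Walk.cons hadj3.symm (P3.append (Walk.cons hadj2.symm
      (P2.append (Walk.cons hadj1.symm P1))))) with hW
  have hmem := hbridge W
  rw [hW] at hmem
  simp only [Walk.edges_append, Walk.edges_cons, List.mem_append, List.mem_cons] at hmem
  rcases hmem with h | h | h | h | h | h | h
  · exact d01 b0 (hP0 _ (Walk.snd_mem_support_of_mem_edges P0 h)) hb0
  · rw [Sym2.eq_iff] at h
    rcases h with ⟨h1, h2⟩ | ⟨h1, h2⟩
    · exact d13 b0 hb0 (h2 ▸ ha3)
    · exact d03 a0 ha0 (h1 ▸ ha3)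
  · exact d03 a0 ha0 (hP3 _ (Walk.fst_mem_support_of_mem_edges P3 h))
  · rw [Sym2.eq_iff] at h
    rcases h with ⟨h1, h2⟩ | ⟨h1, h2⟩
    · exact d03 a0 ha0 (h1 ▸ hb2)
    · exact d02 a0 ha0 (h1 ▸ ha2)
  · exact d02 a0 ha0 (hP2 _ (Walk.fst_mem_support_of_mem_edges P2 h))
  · rw [Sym2.eq_iff] at h
    rcases h with ⟨h1, h2⟩ | ⟨h1, h2⟩
    · exact d02 a0 ha0 (h1 ▸ hb1)
    · exact d01 a0 ha0 (h1 ▸ ha1)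
  · exact d01 a0 ha0 (hP1 _ (Walk.fst_mem_support_of_mem_edges P1 h))



variable {m n : ℕ} {T : SimpleGraph (Fin n)}


lemma hadj_cases {u v : Option (Fin m) × Fin n} (h : ((_root_.starGraph m).boxProd T).Adj u v) :
    (u.1 = v.1 ∧ T.Adj u.2 v.2) ∨
    (u.2 = v.2 ∧ ((u.1 = none ∧ v.1 ≠ none) ∨ (v.1 = none ∧ u.1 ≠ none))) := by
  rw [boxProd_adj] at h
  rcases h with ⟨hs, h2⟩ | ⟨ht, h1⟩
  · rw [_root_.starGraph, fromRel_adj] at hs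
    exact Or.inr ⟨h2, hs.2⟩
  · exact Or.inl ⟨h1, ht⟩

lemma adj_some_some {u v : Option (Fin m) × Fin n} {i j : Fin m} (h : ((_root_.starGraph m).boxProd T).Adj u v)
    (hu : u.1 = some i) (hv : v.1 = some j) : i = j ∧ T.Adj u.2 v.2 := by
  rcases hadj_cases h with ⟨h1, h2⟩ | ⟨_, ⟨h1, _⟩ | ⟨h1, _⟩⟩
  · rw [hu, hv] at h1; exact ⟨Option.some_injective _ h1, h2⟩
  · rw [hu] at h1; simp at h1
  · rw [hv] at h1; simp at h1

lemma adj_none_some {u v : Option (Fin m) × Fin n} {j : Fin m} (h : ((_root_.starGraph m).boxProd T).Adj u v)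
    (hu : u.1 = none) (hv : v.1 = some j) : u.2 = v.2 := by
  rcases hadj_cases h with ⟨h1, _⟩ | ⟨h2, _⟩
  · rw [hu, hv] at h1; simp at h1
  · exact h2

/-- along a walk avoiding the root copy, the star coordinate is constant -/
lemma walk_eq_fst {u v : Option (Fin m) × Fin n} (p : ((_root_.starGraph m).boxProd T).Walk u v)
    (hs : ∀ w ∈ p.support, w.1 ≠ none) : u.1 = v.1 := by
  induction p with
  | nil => rfl
  | @cons a b c hab p ih =>
    have hb : b.1 ≠ none := hs b (by simp)
    have ha : a.1 ≠ none := hs a (by simp)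
    obtain ⟨i, hi⟩ := Option.ne_none_iff_exists'.mp ha
    obtain ⟨j, hj⟩ := Option.ne_none_iff_exists'.mp hb
    have hij := (adj_some_some hab hi hj).1
    rw [hi, hij, ← hj]
    exact ih (fun w hw => hs w (by simp [hw]))

/-- a walk inside a leaf copy projects to a walk in `T` -/
lemma walk_proj {u v : Option (Fin m) × Fin n} (p : ((_root_.starGraph m).boxProd T).Walk u v) (i : Fin m)
    (hs : ∀ w ∈ p.support, w.1 = some i) :
    ∃ q : T.Walk u.2 v.2, ∀ t ∈ q.support, (some i, t) ∈ p.support := by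
  induction p with
  | nil =>
    rename_i w
    refine ⟨Walk.nil, ?_⟩
    intro t ht
    simp only [Walk.support_nil, List.mem_singleton] at ht
    subst ht
    have : w = (some i, w.2) := Prod.ext (hs w (by simp)) rfl
    simp [← this]
  | @cons a b c hab p ih =>
    have ha : a.1 = some i := hs a (by simp)
    have hb : b.1 = some i := hs b (by simp)
    have hadj : T.Adj a.2 b.2 := (adj_some_some hab ha hb).2
    obtain ⟨q, hq⟩ := ih (fun w hw => hs w (by simp [hw]))
    refine ⟨Walk.cons hadj q, ?_⟩
    intro t ht
    rw [Walk.support_cons, List.mem_cons] at ht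
    rcases ht with rfl | ht
    · have : a = (some i, a.2) := Prod.ext ha rfl
      simp [← this]
    · have := hq t ht
      simp [this]

/-- a walk from a leaf copy to the root vertex `(none, τ)`, meeting the root copy only
at that vertex, passes through `(some i, τ)` and projects into the copy -/
lemma walk_to_root {u c : Option (Fin m) × Fin n} {i : Fin m}
    (p : ((_root_.starGraph m).boxProd T).Walk u c) (hc : c.1 = none)
    (hs : ∀ w ∈ p.support, w.1 = none → w = c)
    (hu : u.1 = some i) :
    (some i, c.2) ∈ p.support ∧
      ∃ q : T.Walk u.2 c.2, ∀ t ∈ q.support, t = c.2 ∨ (some i, t) ∈ p.support := by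
  induction p with
  | nil => rw [hc] at hu; simp at hu
  | @cons a b c hab p ih =>
    by_cases hb : b.1 = none
    · have hbr : b = c := hs b (by simp) hb
      have ha2 : a.2 = c.2 := by
        have := adj_none_some (hab.symm) hb hu
        rw [hbr] at this; exact this.symm
      have haeq : a = (some i, c.2) := Prod.ext hu ha2
      constructor
      · simp [← haeq]
      · refine ⟨Walk.nil.copy ha2.symm rfl, ?_⟩
        intro t ht
        rw [Walk.support_copy] at ht
        simp only [Walk.support_nil, List.mem_singleton] at ht
        exact Or.inl ht
    · obtain ⟨j, hj⟩ := Option.ne_none_iff_exists'.mp hb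
      have hij : j = i := by
        have := (adj_some_some hab hu hj).1; exact this.symm
      subst hij
      obtain ⟨hmem, q, hq⟩ := ih hc (fun w hw h0 => hs w (by simp [hw]) h0) hj
      have hadj : T.Adj a.2 b.2 := (adj_some_some hab hu hj).2
      refine ⟨by simp [hmem], ⟨Walk.cons hadj q, ?_⟩⟩
      intro t ht
      rw [Walk.support_cons, List.mem_cons] at ht
      rcases ht with rfl | ht
      · right
        rw [Walk.support_cons, List.mem_cons]
        have haeq : a = (some j, a.2) := Prod.ext hu rfl
        exact Or.inl haeq.symm
      · rcases hq t ht with h | h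
        · exact Or.inl h
        · right; simp [h]







lemma pair_eq {α β : Type*} {p : α × β} {x : α} (h : p.1 = x) : p = (x, p.2) :=
  Prod.ext h rfl











/-- a connected set avoiding the root copy lies in a single leaf copy -/
lemma single_copy {s : Set (Option (Fin m) × Fin n)}
    (h : (((_root_.starGraph m).boxProd T).induce s).Connected)
    (hR : ∀ v ∈ s, v.1 ≠ none) : ∃ i : Fin m, ∀ v ∈ s, v.1 = some i := by
  obtain ⟨⟨x, hx⟩⟩ := h.nonempty
  obtain ⟨i, hi⟩ := Option.ne_none_iff_exists'.mp (hR x hx)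
  refine ⟨i, fun v hv => ?_⟩
  obtain ⟨p, hp⟩ := exists_walk_in _ s h hv hx
  rw [walk_eq_fst p (fun w hw => hR w (hp w hw)), hi]

lemma connIn_proj {s : Set (Option (Fin m) × Fin n)} {i : Fin m}
    (h : (((_root_.starGraph m).boxProd T).induce s).Connected)
    (hcopy : ∀ v ∈ s, v.1 = some i) :
    ConnIn T {t : Fin n | (some i, t) ∈ s} := by
  constructor
  · obtain ⟨⟨x, hx⟩⟩ := h.nonempty
    have hxe : x = (some i, x.2) := pair_eq (hcopy x hx)
    exact ⟨x.2, show ((some i : Option (Fin m)), x.2) ∈ s by rw [← hxe]; exact hx⟩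
  · intro x hx y hy
    obtain ⟨p, hp⟩ := exists_walk_in _ s h hx hy
    obtain ⟨q, hq⟩ := walk_proj p i (fun w hw => hcopy w (hp w hw))
    exact ⟨q, fun t ht => hp _ (hq t ht)⟩

section case1
variable {A : Set (Option (Fin m) × Fin n)} {r : Option (Fin m) × Fin n} {i : Fin m}

/-- if `A` is connected, contains the root vertex `r` (its only root-copy vertex),
and meets leaf copy `i`, then it contains `(some i, r.2)` and its copy-`i` part
joins up with `r.2` -/
lemma root_reach (hA : (((_root_.starGraph m).boxProd T).induce A).Connected)
    (hrA : r ∈ A) (hrn : r.1 = none)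
    (huniq : ∀ w ∈ A, w.1 = none → w = r)
    {u : Option (Fin m) × Fin n} (hu : u ∈ A) (hui : u.1 = some i) :
    (some i, r.2) ∈ A ∧
      ∃ q : T.Walk u.2 r.2, ∀ t ∈ q.support, t = r.2 ∨ (some i, t) ∈ A := by
  obtain ⟨p, hp⟩ := exists_walk_in _ A hA hu hrA
  obtain ⟨h1, q, hq⟩ := walk_to_root p hrn (fun w hw h0 => huniq w (hp w hw) h0) hui
  exact ⟨hp _ h1, q, fun t ht => (hq t ht).imp id (fun h => hp _ h)⟩

lemma connIn_Wstar (hA : (((_root_.starGraph m).boxProd T).induce A).Connected)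
    (hrA : r ∈ A) (hrn : r.1 = none)
    (huniq : ∀ w ∈ A, w.1 = none → w = r) :
    ConnIn T {t : Fin n | (some i, t) ∈ A ∨ t = r.2} := by
  have key : ∀ x, ((some i, x) ∈ A ∨ x = r.2) →
      ∃ q : T.Walk x r.2, ∀ t ∈ q.support, t = r.2 ∨ (some i, t) ∈ A := by
    intro x hx
    rcases hx with hx | rfl
    · exact (root_reach hA hrA hrn huniq hx rfl).2
    · exact ⟨Walk.nil, by simp⟩
  refine ⟨⟨r.2, Or.inr rfl⟩, ?_⟩
  intro x hx y hy
  obtain ⟨qx, hqx⟩ := key x hx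
  obtain ⟨qy, hqy⟩ := key y hy
  refine ⟨qx.append qy.reverse, ?_⟩
  intro t ht
  rw [Walk.mem_support_append_iff] at ht
  rcases ht with ht | ht
  · exact (hqx t ht).symm
  · rw [Walk.support_reverse, List.mem_reverse] at ht
    exact (hqy t ht).symm

lemma edge_from_A (hA : (((_root_.starGraph m).boxProd T).induce A).Connected)
    (hrA : r ∈ A) (hrn : r.1 = none)
    (huniq : ∀ w ∈ A, w.1 = none → w = r)
    {X : Set (Option (Fin m) × Fin n)} (hX : ∀ v ∈ X, v.1 = some i)
    (e : ∃ a ∈ A, ∃ b ∈ X, ((_root_.starGraph m).boxProd T).Adj a b) :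
    ((some i, r.2) ∈ X) ∨
      (∃ s₁, (some i, s₁) ∈ A ∧ ∃ s₂, (some i, s₂) ∈ X ∧ T.Adj s₁ s₂) := by
  obtain ⟨a, ha, b, hb, hadj⟩ := e
  have hbi : b.1 = some i := hX b hb
  have hbe : b = (some i, b.2) := pair_eq hbi
  rcases ho : a.1 with _ | j
  · have har : a = r := huniq a ha ho
    have h2 : a.2 = b.2 := adj_none_some hadj ho hbi
    left
    rw [show ((some i : Option (Fin m)), r.2) = b from ?_]
    · exact hb
    · rw [hbe, ← h2, har]
  · have hji := (adj_some_some hadj ho hbi).1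
    subst hji
    right
    refine ⟨a.2, ?_, b.2, ?_, (adj_some_some hadj ho hbi).2⟩
    · rw [show ((some j : Option (Fin m)), a.2) = a from (pair_eq ho).symm]
      exact ha
    · rw [← hbe]; exact hb

end case1

lemma edge_proj {X Y : Set (Option (Fin m) × Fin n)} {i j : Fin m}
    (hX : ∀ v ∈ X, v.1 = some i) (hY : ∀ v ∈ Y, v.1 = some j)
    (e : ∃ a ∈ X, ∃ b ∈ Y, ((_root_.starGraph m).boxProd T).Adj a b) :
    i = j ∧ ∃ s₁, (some i, s₁) ∈ X ∧ ∃ s₂, (some i, s₂) ∈ Y ∧ T.Adj s₁ s₂ := by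
  obtain ⟨a, ha, b, hb, hadj⟩ := e
  obtain ⟨hij, hadjT⟩ := adj_some_some hadj (hX a ha) (hY b hb)
  subst hij
  refine ⟨rfl, a.2, ?_, b.2, ?_, hadjT⟩
  · rw [show ((some i : Option (Fin m)), a.2) = a from (pair_eq (hX a ha)).symm]
    exact ha
  · rw [show ((some i : Option (Fin m)), b.2) = b from (pair_eq (hY b hb)).symm]
    exact hb

lemma core (hT : T.IsAcyclic)
    (A B C D : Set (Option (Fin m) × Fin n))
    (hA : (((_root_.starGraph m).boxProd T).induce A).Connected)
    (hB : (((_root_.starGraph m).boxProd T).induce B).Connected)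
    (hC : (((_root_.starGraph m).boxProd T).induce C).Connected)
    (hD : (((_root_.starGraph m).boxProd T).induce D).Connected)
    (dAB : ∀ v, v ∈ A → v ∈ B → False)
    (dAC : ∀ v, v ∈ A → v ∈ C → False)
    (dAD : ∀ v, v ∈ A → v ∈ D → False)
    (dBC : ∀ v, v ∈ B → v ∈ C → False)
    (dBD : ∀ v, v ∈ B → v ∈ D → False)
    (dCD : ∀ v, v ∈ C → v ∈ D → False)
    (eAB : ∃ a ∈ A, ∃ b ∈ B, ((_root_.starGraph m).boxProd T).Adj a b)
    (eBC : ∃ a ∈ B, ∃ b ∈ C, ((_root_.starGraph m).boxProd T).Adj a b)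
    (eCD : ∃ a ∈ C, ∃ b ∈ D, ((_root_.starGraph m).boxProd T).Adj a b)
    (eDA : ∃ a ∈ D, ∃ b ∈ A, ((_root_.starGraph m).boxProd T).Adj a b)
    (hBR : ∀ v ∈ B, v.1 ≠ none)
    (hCR : ∀ v ∈ C, v.1 ≠ none)
    (hDR : ∀ v ∈ D, v.1 ≠ none)
    (hAR : ∀ u ∈ A, ∀ v ∈ A, u.1 = none → v.1 = none → u = v) : False := by
  obtain ⟨i, hcopyB⟩ := single_copy hB hBR
  obtain ⟨iC, hcopyC⟩ := single_copy hC hCR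
  obtain ⟨iD, hcopyD⟩ := single_copy hD hDR
  obtain ⟨hiC, eBC'⟩ := edge_proj hcopyB hcopyC eBC
  subst hiC
  obtain ⟨hiD, eCD'⟩ := edge_proj hcopyC hcopyD eCD
  subst hiD
  by_cases hr : ∃ r ∈ A, r.1 = none
  · obtain ⟨r, hrA, hrn⟩ := hr
    have huniq : ∀ w ∈ A, w.1 = none → w = r := fun w hw h0 => hAR w hw r hrA h0 hrn
    -- the special vertex (some i, r.2) is not in B, C or D
    have hτB : ((some i : Option (Fin m)), r.2) ∈ B → False := by
      intro hmem
      obtain ⟨d, hd, a, ha, hadj⟩ := eDA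
      rcases ho : a.1 with _ | j
      · have har : a = r := huniq a ha ho
        have h2 : a.2 = d.2 := adj_none_some hadj.symm ho (hcopyD d hd)
        have : ((some i : Option (Fin m)), r.2) = d := by
          rw [pair_eq (hcopyD d hd), ← h2, har]
        exact dBD _ hmem (this ▸ hd)
      · have hji := (adj_some_some hadj (hcopyD d hd) ho).1
        subst hji
        have := (root_reach hA hrA hrn huniq ha ho).1
        exact dAB _ this hmem
    have hτC : ((some i : Option (Fin m)), r.2) ∈ C → False := by
      intro hmem
      obtain ⟨a, ha, b, hb, hadj⟩ := eAB
      rcases ho : a.1 with _ | j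
      · have har : a = r := huniq a ha ho
        have h2 : a.2 = b.2 := adj_none_some hadj ho (hcopyB b hb)
        have : ((some i : Option (Fin m)), r.2) = b := by
          rw [pair_eq (hcopyB b hb), ← h2, har]
        exact dBC _ (this ▸ hb) hmem
      · have hji := (adj_some_some hadj ho (hcopyB b hb)).1
        subst hji
        have := (root_reach hA hrA hrn huniq ha ho).1
        exact dAC _ this hmem
    have hτD : ((some i : Option (Fin m)), r.2) ∈ D → False := by
      intro hmem
      obtain ⟨a, ha, b, hb, hadj⟩ := eAB
      rcases ho : a.1 with _ | j
      · have har : a = r := huniq a ha ho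
        have h2 : a.2 = b.2 := adj_none_some hadj ho (hcopyB b hb)
        have : ((some i : Option (Fin m)), r.2) = b := by
          rw [pair_eq (hcopyB b hb), ← h2, har]
        exact dBD _ (this ▸ hb) hmem
      · have hji := (adj_some_some hadj ho (hcopyB b hb)).1
        subst hji
        have := (root_reach hA hrA hrn huniq ha ho).1
        exact dAD _ this hmem
    refine tree_no_c4 hT {t : Fin n | (some i, t) ∈ A ∨ t = r.2}
      {t : Fin n | (some i, t) ∈ B} {t : Fin n | (some i, t) ∈ C}
      {t : Fin n | (some i, t) ∈ D}
      (connIn_Wstar hA hrA hrn huniq) (connIn_proj hB hcopyB)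
      (connIn_proj hC hcopyC) (connIn_proj hD hcopyD)
      ?_ ?_ ?_ ?_ ?_ ?_ ?_ ?_ ?_ ?_
    · rintro t (ht | rfl) htB
      · exact dAB _ ht htB
      · exact hτB htB
    · rintro t (ht | rfl) htC
      · exact dAC _ ht htC
      · exact hτC htC
    · rintro t (ht | rfl) htD
      · exact dAD _ ht htD
      · exact hτD htD
    · exact fun t h1 h2 => dBC _ h1 h2
    · exact fun t h1 h2 => dBD _ h1 h2
    · exact fun t h1 h2 => dCD _ h1 h2
    · rcases edge_from_A hA hrA hrn huniq hcopyB eAB with h | ⟨s₁, h1, s₂, h2, hadj⟩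
      · exact absurd h hτB
      · exact ⟨s₁, Or.inl h1, s₂, h2, hadj⟩
    · exact eBC'
    · exact eCD'
    · have eAD : ∃ a ∈ A, ∃ b ∈ D, ((_root_.starGraph m).boxProd T).Adj a b := by
        obtain ⟨d, hd, a, ha, hadj⟩ := eDA
        exact ⟨a, ha, d, hd, hadj.symm⟩
      rcases edge_from_A hA hrA hrn huniq hcopyD eAD with h | ⟨s₁, h1, s₂, h2, hadj⟩
      · exact absurd h hτD
      · exact ⟨s₂, h2, s₁, Or.inl h1, hadj.symm⟩
  · have hAR' : ∀ v ∈ A, v.1 ≠ none := fun v hv h0 => hr ⟨v, hv, h0⟩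
    obtain ⟨iA, hcopyA⟩ := single_copy hA hAR'
    obtain ⟨hiA, eAB'⟩ := edge_proj hcopyA hcopyB eAB
    subst hiA
    obtain ⟨hiD2, eDA'⟩ := edge_proj hcopyD hcopyA eDA
    refine tree_no_c4 hT {t : Fin n | (some iA, t) ∈ A}
      {t : Fin n | (some iA, t) ∈ B} {t : Fin n | (some iA, t) ∈ C}
      {t : Fin n | (some iA, t) ∈ D}
      (connIn_proj hA hcopyA) (connIn_proj hB hcopyB)
      (connIn_proj hC hcopyC) (connIn_proj hD hcopyD)
      (fun t h1 h2 => dAB _ h1 h2) (fun t h1 h2 => dAC _ h1 h2)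
      (fun t h1 h2 => dAD _ h1 h2) (fun t h1 h2 => dBC _ h1 h2)
      (fun t h1 h2 => dBD _ h1 h2) (fun t h1 h2 => dCD _ h1 h2)
      eAB' eBC' eCD' eDA'




lemma grid_bound {m n k : ℕ} {T : SimpleGraph (Fin n)} (hT : T.IsAcyclic)
    (h : (gridGraph k).IsMinorOf ((_root_.starGraph m).boxProd T)) : (k - 1) ^ 2 ≤ 2 * n := by
  classical
  obtain ⟨B, hconn, hdisj, hadj⟩ := h
  set F : Fin k × Fin k → Finset (Option (Fin m) × Fin n) :=
    fun x => (Set.toFinite (B x ∩ {v | v.1 = none})).toFinset with hF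
  have hmemF : ∀ x v, v ∈ F x ↔ v ∈ B x ∧ v.1 = none := by
    intro x v
    rw [hF]
    simp only [Set.Finite.mem_toFinset]
    exact Iff.rfl
  have hdj : ∀ x y : Fin k × Fin k, x ≠ y → ∀ v, v ∈ B x → v ∈ B y → False :=
    fun x y hne v h1 h2 => Set.disjoint_left.mp (hdisj hne) h1 h2
  -- Step A : total weight at most n
  have stepA : ∑ x : Fin k × Fin k, (F x).card ≤ n := by
    have hdjF : ∀ x ∈ (Finset.univ : Finset (Fin k × Fin k)), ∀ y ∈ Finset.univ,
        x ≠ y → Disjoint (F x) (F y) := by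
      intro x _ y _ hne
      rw [Finset.disjoint_left]
      intro v hv hv'
      exact hdj x y hne v ((hmemF x v).mp hv).1 ((hmemF y v).mp hv').1
    rw [← Finset.card_biUnion hdjF]
    have hsub : (Finset.univ.biUnion F) ⊆
        Finset.univ.image (fun t : Fin n => ((none : Option (Fin m)), t)) := by
      intro v hv
      rw [Finset.mem_biUnion] at hv
      obtain ⟨x, _, hvx⟩ := hv
      have h0 := ((hmemF x v).mp hvx).2
      rw [Finset.mem_image]
      refine ⟨v.2, Finset.mem_univ _, ?_⟩
      have : v = ((none : Option (Fin m)), v.2) := Prod.ext h0 rfl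
      exact this.symm
    refine le_trans (Finset.card_le_card hsub) ?_
    rw [Finset.card_image_of_injective _ (fun a b hab => by
      simpa using congrArg Prod.snd hab)]
    simp
  have hemp : ∀ x, (F x).card = 0 → ∀ v ∈ B x, v.1 ≠ none := by
    intro x hx v hv h0
    rw [Finset.card_eq_zero] at hx
    have : v ∈ F x := (hmemF x v).mpr ⟨hv, h0⟩
    rw [hx] at this
    exact absurd this (Finset.notMem_empty v)
  have hsub1 : ∀ x, (F x).card ≤ 1 →
      ∀ u ∈ B x, ∀ v ∈ B x, u.1 = none → v.1 = none → u = v := by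
    intro x hx u hu v hv h0u h0v
    exact Finset.card_le_one.mp hx u ((hmemF x u).mpr ⟨hu, h0u⟩) v ((hmemF x v).mpr ⟨hv, h0v⟩)
  -- the square lemma
  have CORE4 : ∀ p q u v : Fin k × Fin k,
      p ≠ q → p ≠ u → p ≠ v → q ≠ u → q ≠ v → u ≠ v →
      (gridGraph k).Adj p q → (gridGraph k).Adj q u → (gridGraph k).Adj u v →
      (gridGraph k).Adj v p →
      (F p).card ≤ 1 → (F q).card = 0 → (F u).card = 0 → (F v).card = 0 → False := by
    intro p q u v npq npu npv nqu nqv nuv apq aqu auv avp h1 h2 h3 h4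
    exact core hT (B p) (B q) (B u) (B v) (hconn p) (hconn q) (hconn u) (hconn v)
      (hdj p q npq) (hdj p u npu) (hdj p v npv) (hdj q u nqu) (hdj q v nqv)
      (hdj u v nuv) (hadj apq) (hadj aqu) (hadj auv) (hadj avp)
      (hemp q h2) (hemp u h3) (hemp v h4) (hsub1 p h1)
  have SQ : ∀ p q u v : Fin k × Fin k,
      p ≠ q → p ≠ u → p ≠ v → q ≠ u → q ≠ v → u ≠ v →
      (gridGraph k).Adj p q → (gridGraph k).Adj q u → (gridGraph k).Adj u v →
      (gridGraph k).Adj v p →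
      2 ≤ (F p).card + (F q).card + (F u).card + (F v).card := by
    intro p q u v npq npu npv nqu nqv nuv apq aqu auv avp
    by_contra hlt
    push_neg at hlt
    rcases Nat.eq_zero_or_pos (F q).card with hq | hq
    · rcases Nat.eq_zero_or_pos (F u).card with hu | hu
      · rcases Nat.eq_zero_or_pos (F v).card with hv | hv
        · exact CORE4 p q u v npq npu npv nqu nqv nuv apq aqu auv avp (by omega) hq hu hv
        · exact CORE4 v p q u npv.symm nqv.symm nuv.symm npq npu nqu avp apq aqu auv
            (by omega) (by omega) hq hu
      · exact CORE4 u v p q nuv npu.symm nqu.symm npv.symm nqv.symm npq auv avp apq aqu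
          (by omega) (by omega) (by omega) hq
    · exact CORE4 q u v p nqu nqv npq.symm nuv npu.symm npv.symm aqu auv avp apq
        (by omega) (by omega) (by omega) (by omega)
  -- counting
  rcases Nat.lt_or_ge k 2 with hk | hk
  · interval_cases k <;> simp
  have hk0 : 0 < k := by omega
  set K := k - 1 with hK
  set vert : ℕ → ℕ → Fin k × Fin k :=
    fun i j => (⟨i % k, Nat.mod_lt _ hk0⟩, ⟨j % k, Nat.mod_lt _ hk0⟩) with hvert
  have vert_inj : ∀ a b c d : ℕ, a < k → b < k → c < k → d < k →
      vert a b = vert c d → a = c ∧ b = d := by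
    intro a b c d ha hb hc hd h
    rw [Prod.ext_iff] at h
    obtain ⟨h1, h2⟩ := h
    rw [Fin.ext_iff] at h1 h2
    simp only [hvert] at h1 h2
    rw [Nat.mod_eq_of_lt ha, Nat.mod_eq_of_lt hc] at h1
    rw [Nat.mod_eq_of_lt hb, Nat.mod_eq_of_lt hd] at h2
    exact ⟨h1, h2⟩
  have vert_ne : ∀ a b c d : ℕ, a < k → b < k → c < k → d < k → (a, b) ≠ (c, d) →
      vert a b ≠ vert c d := by
    intro a b c d ha hb hc hd hne h
    obtain ⟨h1, h2⟩ := vert_inj a b c d ha hb hc hd h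
    exact hne (by rw [h1, h2])
  have adj_h : ∀ i j : ℕ, i + 1 < k → j < k →
      (gridGraph k).Adj (vert i j) (vert (i + 1) j) := by
    intro i j hi hj
    rw [gridGraph, fromRel_adj]
    refine ⟨vert_ne i j (i+1) j (by omega) hj hi hj (by simp), Or.inl (Or.inr ⟨rfl, ?_⟩)⟩
    show (i % k) + 1 = (i + 1) % k
    rw [Nat.mod_eq_of_lt (by omega), Nat.mod_eq_of_lt hi]
  have adj_v : ∀ i j : ℕ, i < k → j + 1 < k →
      (gridGraph k).Adj (vert i j) (vert i (j + 1)) := by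
    intro i j hi hj
    rw [gridGraph, fromRel_adj]
    refine ⟨vert_ne i j i (j+1) hi (by omega) hi hj (by simp), Or.inl (Or.inl ⟨rfl, ?_⟩)⟩
    show (j % k) + 1 = (j + 1) % k
    rw [Nat.mod_eq_of_lt (by omega), Nat.mod_eq_of_lt hj]
  have SQ' : ∀ i j : ℕ, i < K → j < K →
      2 ≤ (F (vert i j)).card + (F (vert (i+1) j)).card + (F (vert i (j+1))).card +
        (F (vert (i+1) (j+1))).card := by
    intro i j hi hj
    have hik : i + 1 < k := by omega
    have hjk : j + 1 < k := by omega
    have h2 := SQ (vert i j) (vert (i+1) j) (vert (i+1) (j+1)) (vert i (j+1))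
      (vert_ne i j (i+1) j (by omega) (by omega) (by omega) (by omega) (by simp))
      (vert_ne i j (i+1) (j+1) (by omega) (by omega) (by omega) (by omega) (by simp))
      (vert_ne i j i (j+1) (by omega) (by omega) (by omega) (by omega) (by simp))
      (vert_ne (i+1) j (i+1) (j+1) (by omega) (by omega) (by omega) (by omega) (by simp))
      (vert_ne (i+1) j i (j+1) (by omega) (by omega) (by omega) (by omega) (by simp))
      (vert_ne (i+1) (j+1) i (j+1) (by omega) (by omega) (by omega) (by omega) (by simp))
      (adj_h i j hik (by omega)) (adj_v (i+1) j (by omega) hjk)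
      ((adj_h i (j+1) hik (by omega)).symm) ((adj_v i j (by omega) hjk).symm)
    omega
  have sum4 : ∀ s t : ℕ, s ≤ 1 → t ≤ 1 →
      ∑ ij ∈ (Finset.range K ×ˢ Finset.range K), (F (vert (ij.1 + s) (ij.2 + t))).card ≤ n := by
    intro s t hs ht
    have hinj : ∀ a ∈ (Finset.range K ×ˢ Finset.range K),
        ∀ b ∈ (Finset.range K ×ˢ Finset.range K),
        (fun ij : ℕ × ℕ => vert (ij.1 + s) (ij.2 + t)) a =
          (fun ij : ℕ × ℕ => vert (ij.1 + s) (ij.2 + t)) b → a = b := by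
      intro a ha b hb hab
      simp only [Finset.mem_product, Finset.mem_range] at ha hb
      obtain ⟨h1, h2⟩ := vert_inj _ _ _ _ (by omega) (by omega) (by omega) (by omega) hab
      exact Prod.ext (by omega) (by omega)
    rw [← Finset.sum_image (f := fun x => (F x).card) hinj]
    exact le_trans (Finset.sum_le_sum_of_subset (Finset.subset_univ _)) stepA
  have main : 2 * (K * K) ≤ 4 * n := by
    have h1 : 2 * (K * K) ≤
        ∑ ij ∈ (Finset.range K ×ˢ Finset.range K),
          ((F (vert ij.1 ij.2)).card + (F (vert (ij.1+1) ij.2)).card +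
            (F (vert ij.1 (ij.2+1))).card + (F (vert (ij.1+1) (ij.2+1))).card) := by
      calc 2 * (K * K) = ∑ _ij ∈ (Finset.range K ×ˢ Finset.range K), 2 := by
            rw [Finset.sum_const, Finset.card_product, Finset.card_range, smul_eq_mul]
            ring
        _ ≤ _ := by
            refine Finset.sum_le_sum ?_
            intro ij hij
            rw [Finset.mem_product, Finset.mem_range, Finset.mem_range] at hij
            exact SQ' ij.1 ij.2 hij.1 hij.2
    rw [Finset.sum_add_distrib, Finset.sum_add_distrib, Finset.sum_add_distrib] at h1
    have e00 := sum4 0 0 (by omega) (by omega)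
    have e10 := sum4 1 0 (by omega) (by omega)
    have e01 := sum4 0 1 (by omega) (by omega)
    have e11 := sum4 1 1 (by omega) (by omega)
    simp only [Nat.add_zero] at e00 e10 e01 e11
    omega
  rw [pow_two]
  omega


end Stmt17Aux

/-- For any star `S` and any tree `T` on `n` vertices, `gm(S □ T) ≤ √(2n) + 1`; that
is, if the `k × k` grid is a minor of `S □ T` then `k ≤ √(2n) + 1`. -/
theorem stmt17 (m n : ℕ) (T : SimpleGraph (Fin n)) (hT : T.IsTree) :
    (gridMinorNum ((_root_.starGraph m).boxProd T) : ℝ) ≤ Real.sqrt (2 * n) + 1 ∧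
    ∀ k : ℕ, (gridGraph k).IsMinorOf ((_root_.starGraph m).boxProd T) →
      (k : ℝ) ≤ Real.sqrt (2 * n) + 1 := by
  have hac : T.IsAcyclic := hT.2
  have hs : (0:ℝ) ≤ Real.sqrt (2 * n) := Real.sqrt_nonneg _
  have key : ∀ k : ℕ, (gridGraph k).IsMinorOf ((_root_.starGraph m).boxProd T) →
      (k : ℝ) ≤ Real.sqrt (2 * n) + 1 := by
    intro k hk
    have hb := Stmt17Aux.grid_bound hac hk
    rcases Nat.eq_zero_or_pos k with rfl | hk1
    · rw [show ((0:ℕ):ℝ) = 0 from by norm_num]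
      linarith
    · have h1 : (((k - 1 : ℕ)) : ℝ) ^ 2 ≤ ((2 * n : ℕ) : ℝ) := by exact_mod_cast hb
      have h1' : (((k - 1 : ℕ)) : ℝ) ^ 2 ≤ 2 * (n : ℝ) := by push_cast at h1 ⊢; linarith
      have h2 : (((k - 1 : ℕ)) : ℝ) ≤ Real.sqrt (2 * n) := by
        calc (((k - 1 : ℕ)) : ℝ) = Real.sqrt ((((k - 1 : ℕ)) : ℝ) ^ 2) :=
              (Real.sqrt_sq (by positivity)).symm
          _ ≤ _ := Real.sqrt_le_sqrt h1'
      have h3 : (((k - 1 : ℕ)) : ℝ) = (k : ℝ) - 1 := by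
        rw [Nat.cast_sub hk1]
        norm_num
      rw [h3] at h2
      linarith
  refine ⟨?_, key⟩
  have hne : Set.Nonempty {k : ℕ | (gridGraph k).IsMinorOf ((_root_.starGraph m).boxProd T)} := by
    refine ⟨0, fun x => x.1.elim0, fun x => x.1.elim0, fun x y h => x.1.elim0,
      fun x y h => x.1.elim0⟩
  have hbdd : BddAbove {k : ℕ | (gridGraph k).IsMinorOf ((_root_.starGraph m).boxProd T)} := by
    refine ⟨2 * n + 2, fun k hk => ?_⟩
    have hb := Stmt17Aux.grid_bound hac hk
    have h4 : k - 1 ≤ (k - 1) ^ 2 := Nat.le_self_pow (by norm_num) _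
    omega
  exact key _ (Nat.sSup_mem hne hbdd)
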